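/- Let ξ₁,…,ξ_t be exchangeable {0,1}-valued random variables and let b be an integer with 1 ≤ b ≤ t. If P(ξ₁ = ξ₂ = ⋯ = ξ_b = 1) ≤ q^b for some q ∈ (0,1), then for every integer T with b ≤ T ≤ t−1, P(∑_{i=1}^t ξ_i ≥ T) ≤ C(t,b) q^b / C(T,b), where C(n,k) denotes the binomial coefficient. -/

import Mathlib

open MeasureTheory ProbabilityTheory
open scoped ENNReal

/-- If `ξ₁,…,ξ_t` are exchangeable `{0,1}`-valued random variables,
`1 ≤ b ≤ t`, and `P(ξ₁ = ⋯ = ξ_b = 1) ≤ q ^ b` for some `q ∈ (0,1)`, then for every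
integer `T` with `b ≤ T ≤ t − 1`,
`P(∑ ξ_i ≥ T) ≤ C(t,b) q^b / C(T,b)`. -/
theorem exchangeable_markov_bound
    {Ω : Type*} [MeasureSpace Ω] [IsProbabilityMeasure (ℙ : Measure Ω)]
    (t b : ℕ) (hb : 1 ≤ b) (hbt : b ≤ t)
    (ξ : Fin t → Ω → ℝ) (hmeas : ∀ i, Measurable (ξ i))
    (h01 : ∀ i ω, ξ i ω = 0 ∨ ξ i ω = 1)
    (hexch : ∀ σ : Equiv.Perm (Fin t),
      Measure.map (fun ω => fun i => ξ (σ i) ω) ℙ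
        = Measure.map (fun ω => fun i => ξ i ω) ℙ)
    (q : ℝ) (hq : q ∈ Set.Ioo (0 : ℝ) 1)
    (hqb : ℙ {ω | ∀ i : Fin t, (i : ℕ) < b → ξ i ω = 1} ≤ ENNReal.ofReal (q ^ b))
    (T : ℕ) (hT1 : b ≤ T) (hT2 : T ≤ t - 1) :
    ℙ {ω | (T : ℝ) ≤ ∑ i, ξ i ω}
      ≤ ENNReal.ofReal ((t.choose b : ℝ) * q ^ b / (T.choose b : ℝ)) := by
  classical
  set E : Set Ω := {ω | (T : ℝ) ≤ ∑ i, ξ i ω} with hE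
  have hEmeas : MeasurableSet E := by
    have hsum : Measurable fun ω => ∑ i, ξ i ω :=
      Finset.measurable_sum _ fun i _ => hmeas i
    exact measurableSet_le measurable_const hsum
  set EB : Finset (Fin t) → Set Ω := fun B => {ω | ∀ i ∈ B, ξ i ω = 1} with hEBdef
  have hEBmeas : ∀ B, MeasurableSet (EB B) := by
    intro B
    have hEBeq : EB B = ⋂ i ∈ B, (ξ i) ⁻¹' {1} := by
      ext ω; simp [hEBdef]
    rw [hEBeq]
    exact MeasurableSet.biInter (Set.to_countable _)
      fun i _ => (hmeas i) (measurableSet_singleton 1)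
  -- measurable S
  set S : Set (Fin t → ℝ) := {f | ∀ i : Fin t, (i : ℕ) < b → f i = 1} with hSdef
  have hSmeas : MeasurableSet S := by
    have hSeq : S = ⋂ i : Fin t, {f : Fin t → ℝ | (i : ℕ) < b → f i = 1} := by
      ext f; simp [hSdef]
    rw [hSeq]
    refine MeasurableSet.iInter fun i => ?_
    by_cases hi : (i : ℕ) < b
    · have : {f : Fin t → ℝ | (i : ℕ) < b → f i = 1}
          = (fun f : Fin t → ℝ => f i) ⁻¹' {1} := by
        ext f; simp [hi]
      rw [this]
      exact (measurable_pi_apply i) (measurableSet_singleton 1)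
    · have : {f : Fin t → ℝ | (i : ℕ) < b → f i = 1} = Set.univ := by
        ext f; simp [hi]
      rw [this]; exact MeasurableSet.univ
  have hmapmeas : ∀ g : Fin t → Fin t, Measurable fun ω => fun i => ξ (g i) ω :=
    fun g => measurable_pi_lambda _ fun i => hmeas (g i)
  -- Step A
  have stepA : ∀ B : Finset (Fin t), B.card = b → ℙ (EB B) ≤ ENNReal.ofReal (q ^ b) := by
    intro B hB
    have e1 : {i : Fin t // (i : ℕ) < b} ≃ Fin b :=
      { toFun := fun x => ⟨x.1, x.2⟩
        invFun := fun j => ⟨⟨j.1, lt_of_lt_of_le j.2 hbt⟩, j.2⟩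
        left_inv := fun x => by ext; rfl
        right_inv := fun j => by ext; rfl }
    have e2 : Fin b ≃ {i : Fin t // i ∈ B} := (B.orderIsoOfFin hB).toEquiv
    set e : {i : Fin t // (i : ℕ) < b} ≃ {i : Fin t // i ∈ B} := e1.trans e2 with hedef
    set σ : Equiv.Perm (Fin t) := e.extendSubtype with hσdef
    have key : EB B = {ω | ∀ i : Fin t, (i : ℕ) < b → ξ (σ i) ω = 1} := by
      ext ω
      constructor
      · intro h i hi
        exact h _ (e.extendSubtype_mem i hi)
      · intro h j hj
        obtain ⟨i, hi⟩ := e.surjective ⟨j, hj⟩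
        have hσi : σ (i : Fin t) = j := by
          rw [hσdef, e.extendSubtype_apply_of_mem _ i.2]
          simp [hi]
        have := h i i.2
        rwa [hσi] at this
    have hpre1 : EB B = (fun ω => fun i => ξ (σ i) ω) ⁻¹' S := by
      rw [key]; rfl
    have hpre2 : {ω | ∀ i : Fin t, (i : ℕ) < b → ξ i ω = 1}
        = (fun ω => fun i => ξ i ω) ⁻¹' S := rfl
    calc ℙ (EB B) = Measure.map (fun ω => fun i => ξ (σ i) ω) ℙ S := by
          rw [hpre1, Measure.map_apply (hmapmeas σ) hSmeas]
      _ = Measure.map (fun ω => fun i => ξ i ω) ℙ S := by rw [hexch σ]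
      _ = ℙ {ω | ∀ i : Fin t, (i : ℕ) < b → ξ i ω = 1} := by
          rw [Measure.map_apply (measurable_pi_lambda _ hmeas) hSmeas, hpre2]
      _ ≤ ENNReal.ofReal (q ^ b) := hqb
  -- pointwise counting
  have pointwise : ∀ ω : Ω, (T.choose b : ℝ≥0∞) * E.indicator 1 ω
      ≤ ∑ B ∈ Finset.powersetCard b Finset.univ, (EB B).indicator 1 ω := by
    intro ω
    by_cases hω : ω ∈ E
    · rw [Set.indicator_of_mem hω]
      simp only [Pi.one_apply, mul_one]
      set F : Finset (Fin t) := Finset.univ.filter (fun i => ξ i ω = 1) with hFdef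
      have hsum : ∑ i, ξ i ω = (F.card : ℝ) := by
        calc ∑ i, ξ i ω = ∑ i, (if ξ i ω = 1 then (1 : ℝ) else 0) :=
              Finset.sum_congr rfl fun i _ => by
                rcases h01 i ω with h | h <;> simp [h]
          _ = (F.card : ℝ) := by rw [Finset.sum_boole]
      have hcard : T ≤ F.card := by
        have h1 : (T : ℝ) ≤ (F.card : ℝ) := by
          have := hω; rw [hE, Set.mem_setOf_eq, hsum] at this; exact this
        exact_mod_cast h1
      have hsub : Finset.powersetCard b F ⊆ Finset.powersetCard b Finset.univ :=
        Finset.powersetCard_mono (Finset.subset_univ F)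
      calc (T.choose b : ℝ≥0∞) ≤ (F.card.choose b : ℝ≥0∞) := by
            exact_mod_cast Nat.choose_le_choose b hcard
        _ = ∑ _B ∈ Finset.powersetCard b F, (1 : ℝ≥0∞) := by
            rw [Finset.sum_const, Finset.card_powersetCard]; simp
        _ ≤ ∑ B ∈ Finset.powersetCard b F, (EB B).indicator 1 ω := by
            refine Finset.sum_le_sum fun B hB => ?_
            have hmem : ω ∈ EB B := by
              intro i hi
              have hiF : i ∈ F := (Finset.mem_powersetCard.1 hB).1 hi
              exact (Finset.mem_filter.1 hiF).2
            simp [Set.indicator_of_mem hmem]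
        _ ≤ ∑ B ∈ Finset.powersetCard b Finset.univ, (EB B).indicator 1 ω :=
            Finset.sum_le_sum_of_subset hsub
    · rw [Set.indicator_of_notMem hω, mul_zero]
      exact zero_le
  -- integrate
  have hint : (T.choose b : ℝ≥0∞) * ℙ E ≤ (t.choose b : ℝ≥0∞) * ENNReal.ofReal (q ^ b) := by
    have lhs : ∫⁻ ω, (T.choose b : ℝ≥0∞) * E.indicator 1 ω ∂ℙ = (T.choose b : ℝ≥0∞) * ℙ E := by
      rw [lintegral_const_mul _ (measurable_one.indicator hEmeas),
        lintegral_indicator_one hEmeas]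
    have rhs : ∫⁻ ω, ∑ B ∈ Finset.powersetCard b Finset.univ, (EB B).indicator 1 ω ∂ℙ
        = ∑ B ∈ Finset.powersetCard b Finset.univ, ℙ (EB B) := by
      rw [lintegral_finset_sum _ fun B _ => measurable_one.indicator (hEBmeas B)]
      refine Finset.sum_congr rfl fun B _ => ?_
      rw [lintegral_indicator_one (hEBmeas B)]
    calc (T.choose b : ℝ≥0∞) * ℙ E
        = ∫⁻ ω, (T.choose b : ℝ≥0∞) * E.indicator 1 ω ∂ℙ := lhs.symm
      _ ≤ ∫⁻ ω, ∑ B ∈ Finset.powersetCard b Finset.univ, (EB B).indicator 1 ω ∂ℙ :=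
          lintegral_mono pointwise
      _ = ∑ B ∈ Finset.powersetCard b Finset.univ, ℙ (EB B) := rhs
      _ ≤ ∑ _B ∈ Finset.powersetCard b Finset.univ, ENNReal.ofReal (q ^ b) :=
          Finset.sum_le_sum fun B hB => stepA B (Finset.mem_powersetCard.1 hB).2
      _ = (t.choose b : ℝ≥0∞) * ENNReal.ofReal (q ^ b) := by
          rw [Finset.sum_const, Finset.card_powersetCard, Finset.card_univ, Fintype.card_fin,
            nsmul_eq_mul]
  have hTc0 : (T.choose b : ℝ≥0∞) ≠ 0 := by
    exact_mod_cast (Nat.choose_pos hT1).ne'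
  have hTctop : (T.choose b : ℝ≥0∞) ≠ ⊤ := ENNReal.natCast_ne_top _
  have hdiv : ℙ E ≤ (t.choose b : ℝ≥0∞) * ENNReal.ofReal (q ^ b) / (T.choose b : ℝ≥0∞) :=
    (ENNReal.le_div_iff_mul_le (Or.inl hTc0) (Or.inl hTctop)).2 (by rwa [mul_comm])
  have hTcpos : (0 : ℝ) < (T.choose b : ℝ) := by exact_mod_cast Nat.choose_pos hT1
  have hrw : ENNReal.ofReal ((t.choose b : ℝ) * q ^ b / (T.choose b : ℝ))
      = (t.choose b : ℝ≥0∞) * ENNReal.ofReal (q ^ b) / (T.choose b : ℝ≥0∞) := by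
    rw [ENNReal.ofReal_div_of_pos hTcpos,
      ENNReal.ofReal_mul (by positivity : (0 : ℝ) ≤ (t.choose b : ℝ)),
      ENNReal.ofReal_natCast, ENNReal.ofReal_natCast]
  rw [hrw]
  exact hdiv
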